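/- Let ζ_∞ be the unique zero in (0,1) of s ↦ ϱ(s) - s + 1, where ϱ(s) = log(s) + √(1-s²) - log(1+√(1-s²)), and let σ = √(1-ζ_∞²) - ζ_∞. Then for all s ∈ (0,1), σ · log(s/ζ_∞) ≥ ϱ(s) - s + 1. -/

import Mathlib

/-- The Debye exponent `ϱ(s) = log s + √(1-s²) - log(1+√(1-s²))`. -/
noncomputable def debyeRho (s : ℝ) : ℝ :=
  Real.log s + Real.sqrt (1 - s ^ 2) - Real.log (1 + Real.sqrt (1 - s ^ 2))

lemma debyeRho_hasDerivAt {x : ℝ} (hx0 : 0 < x) (hx1 : x < 1) :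
    HasDerivAt debyeRho (Real.sqrt (1 - x ^ 2) / x) x := by
  have h1 : (0:ℝ) < 1 - x ^ 2 := by nlinarith
  set c := Real.sqrt (1 - x ^ 2) with hc
  have hcpos : 0 < c := Real.sqrt_pos.mpr h1
  have hc2 : c ^ 2 = 1 - x ^ 2 := Real.sq_sqrt h1.le
  have h1c : 0 < 1 + c := by linarith
  have hlog : HasDerivAt Real.log (1 / x) x := by
    simpa using Real.hasDerivAt_log hx0.ne'
  have hinner : HasDerivAt (fun s : ℝ => 1 - s ^ 2) (-(2 * x)) x := by
    simpa using ((hasDerivAt_pow 2 x).const_sub 1)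
  have hsqrt : HasDerivAt (fun s : ℝ => Real.sqrt (1 - s ^ 2))
      (1 / (2 * c) * (-(2 * x))) x :=
    (Real.hasDerivAt_sqrt h1.ne').comp x hinner
  have hlog2 : HasDerivAt (fun s : ℝ => Real.log (1 + Real.sqrt (1 - s ^ 2)))
      ((1 / (2 * c) * (-(2 * x))) / (1 + c)) x := by
    exact (hsqrt.const_add 1).log h1c.ne'
  have := (hlog.add hsqrt).sub hlog2
  refine this.congr_deriv ?_
  field_simp
  linear_combination (-c) * hc2

lemma mono_aux {a b : ℝ} (ha : 0 < a) (hab : a < b) (hb : b < 1) :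
    a - Real.sqrt (1 - a ^ 2) < b - Real.sqrt (1 - b ^ 2) := by
  have h : Real.sqrt (1 - b ^ 2) < Real.sqrt (1 - a ^ 2) := by
    apply Real.sqrt_lt_sqrt (by nlinarith) (by nlinarith)
  linarith

theorem log_tangent_dominates (ζ : ℝ) (hζ : ζ ∈ Set.Ioo (0:ℝ) 1)
    (hzero : debyeRho ζ - ζ + 1 = 0)
    (huniq : ∀ s ∈ Set.Ioo (0:ℝ) 1, debyeRho s - s + 1 = 0 → s = ζ) :
    ∀ s ∈ Set.Ioo (0:ℝ) 1,
      (Real.sqrt (1 - ζ ^ 2) - ζ) * Real.log (s / ζ) ≥ debyeRho s - s + 1 := by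
  obtain ⟨hζ0, hζ1⟩ := hζ
  set σ := Real.sqrt (1 - ζ ^ 2) - ζ with hσ
  set F : ℝ → ℝ := fun s => σ * Real.log s - (debyeRho s - s + 1) with hF
  have hFder : ∀ x ∈ Set.Ioo (0:ℝ) 1,
      HasDerivAt F ((σ + x - Real.sqrt (1 - x ^ 2)) / x) x := by
    rintro x ⟨hx0, hx1⟩
    have h1 : HasDerivAt (fun s : ℝ => σ * Real.log s) (σ * x⁻¹) x :=
      (Real.hasDerivAt_log hx0.ne').const_mul σ
    have h2 : HasDerivAt (fun s : ℝ => debyeRho s - s + 1)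
        (Real.sqrt (1 - x ^ 2) / x - 1) x := by
      simpa using ((debyeRho_hasDerivAt hx0 hx1).sub (hasDerivAt_id x)).add_const 1
    have := h1.sub h2
    refine this.congr_deriv ?_
    field_simp
    ring
  have hFcont : ContinuousOn F (Set.Ioo 0 1) := fun x hx =>
    ((hFder x hx).continuousAt).continuousWithinAt
  -- key: F x ≥ F ζ for all x ∈ (0,1)
  have key : ∀ x ∈ Set.Ioo (0:ℝ) 1, F ζ ≤ F x := by
    rintro x ⟨hx0, hx1⟩
    rcases lt_trichotomy x ζ with h | h | h
    · -- antitone on [x, ζ]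
      have hsub : Set.Icc x ζ ⊆ Set.Ioo (0:ℝ) 1 := fun y hy =>
        ⟨lt_of_lt_of_le hx0 hy.1, lt_of_le_of_lt hy.2 hζ1⟩
      have hanti : AntitoneOn F (Set.Icc x ζ) := by
        apply antitoneOn_of_deriv_nonpos (convex_Icc x ζ) (hFcont.mono hsub)
        · intro y hy
          rw [interior_Icc] at hy
          exact ((hFder y (hsub (Set.Ioo_subset_Icc_self hy))).differentiableAt).differentiableWithinAt
        · intro y hy
          rw [interior_Icc] at hy
          have hy0 : 0 < y := lt_trans hx0 hy.1
          have hy1 : y < 1 := lt_trans hy.2 hζ1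
          rw [(hFder y ⟨hy0, hy1⟩).deriv]
          have := mono_aux hy0 hy.2 hζ1
          have hnum : σ + y - Real.sqrt (1 - y ^ 2) < 0 := by
            simp only [hσ]; linarith
          exact div_nonpos_of_nonpos_of_nonneg hnum.le hy0.le
      exact hanti ⟨le_refl x, h.le⟩ ⟨h.le, le_refl ζ⟩ h.le
    · rw [h]
    · have hsub : Set.Icc ζ x ⊆ Set.Ioo (0:ℝ) 1 := fun y hy =>
        ⟨lt_of_lt_of_le hζ0 hy.1, lt_of_le_of_lt hy.2 hx1⟩
      have hmono : MonotoneOn F (Set.Icc ζ x) := by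
        apply monotoneOn_of_deriv_nonneg (convex_Icc ζ x) (hFcont.mono hsub)
        · intro y hy
          rw [interior_Icc] at hy
          exact ((hFder y (hsub (Set.Ioo_subset_Icc_self hy))).differentiableAt).differentiableWithinAt
        · intro y hy
          rw [interior_Icc] at hy
          have hy0 : 0 < y := lt_trans hζ0 hy.1
          have hy1 : y < 1 := lt_trans hy.2 hx1
          rw [(hFder y ⟨hy0, hy1⟩).deriv]
          have := mono_aux hζ0 hy.1 hy1
          have hnum : 0 < σ + y - Real.sqrt (1 - y ^ 2) := by
            simp only [hσ]; linarith
          positivity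
      exact hmono ⟨le_refl ζ, h.le⟩ ⟨h.le, le_refl x⟩ h.le
  rintro s hs
  have hFζ : F ζ = σ * Real.log ζ := by simp [hF, hzero]
  have := key s hs
  rw [hFζ] at this
  have hlogdiv : Real.log (s / ζ) = Real.log s - Real.log ζ :=
    Real.log_div (ne_of_gt hs.1) hζ0.ne'
  rw [ge_iff_le, hlogdiv]
  simp only [hF] at this
  nlinarith [this]
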